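/- Let 0 < r ≤ 1, 1 ≤ p ≤ 2, 1/r = 1/2 + 1/p, and let p' be the conjugate exponent of p. Let X be a Banach space and let T : X → X admit a representation T x = Σ_k λ_k x'_k(x) x_k with Σ_k |λ_k|^r < ∞, (x'_k) bounded in X*, and (x_k) weakly p'-summable in X (i.e. T belongs to the ideal N_{[r,p']}(X) = N_{r,∞,p'}(X)). Then T admits a factorization T = B ∘ A, where A : X → l_p is an r-nuclear operator (i.e. A x = Σ_k κ_k y'_k(x) z_k with Σ_k |κ_k|^r < ∞, (y'_k) bounded in X*, (z_k) bounded in l_p) and B : l_p → X is a bounded linear operator. -/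

import Mathlib

open Filter
open scoped ENNReal Topology

section ops
variable {X : Type*} [NormedAddCommGroup X] [NormedSpace ℂ X]

/-- `(x_k)` is weakly `q`-summable (`q = ⊤` meaning bounded; `q < ∞` meaning
`sup_{‖f‖≤1} ∑_k |f(x_k)|^q < ∞`). -/
def WeaklyQSummable (q : ℝ≥0∞) (x : ℕ → X) : Prop :=
  (q = ⊤ → ∃ M, ∀ k, ‖x k‖ ≤ M) ∧
  (q ≠ ⊤ → ∃ C, ∀ f : X →L[ℂ] ℂ, ‖f‖ ≤ 1 →
    ∀ F : Finset ℕ, ∑ k ∈ F, ‖f (x k)‖ ^ q.toReal ≤ C)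

/-- An operator `A : X → Y` is `r`-nuclear: `A v = ∑_k κ_k y'_k(v) z_k` with
`∑_k ‖κ_k‖^r < ∞`, `(y'_k)` bounded in `X*` and `(z_k)` bounded in `Y`. -/
def IsRNuclear (r : ℝ) {Y : Type*} [NormedAddCommGroup Y] [NormedSpace ℂ Y]
    (A : X →L[ℂ] Y) : Prop :=
  ∃ (κ : ℕ → ℂ) (y' : ℕ → X →L[ℂ] ℂ) (z : ℕ → Y),
    Summable (fun k => ‖κ k‖ ^ r) ∧ (∃ M, ∀ k, ‖y' k‖ ≤ M) ∧
    (∃ M, ∀ k, ‖z k‖ ≤ M) ∧ ∀ v, A v = ∑' k, (κ k * (y' k) v) • z k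

end ops

/-- If `∑ ‖lam k‖^r < ∞` and `0 < r ≤ p` then `∑ ‖lam k‖^p < ∞`. -/
lemma aux_rpow_summable {lam : ℕ → ℂ} {r p : ℝ} (hr : 0 < r) (hp : 0 < p) (hrp : r ≤ p)
    (h : Summable fun k => ‖lam k‖ ^ r) : Summable fun k => ‖lam k‖ ^ p := by
  refine Summable.of_norm_bounded_eventually_nat h ?_
  have h0 : Tendsto (fun k => ‖lam k‖ ^ r) atTop (𝓝 0) := h.tendsto_atTop_zero
  filter_upwards [h0.eventually (eventually_le_nhds zero_lt_one)] with k hk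
  rw [Real.norm_of_nonneg (Real.rpow_nonneg (norm_nonneg _) _)]
  rcases eq_or_lt_of_le (norm_nonneg (lam k)) with h0' | h0'
  · rw [← h0', Real.zero_rpow hp.ne', Real.zero_rpow hr.ne']
  · have h1 : ‖lam k‖ ≤ 1 := by
      by_contra hgt
      push_neg at hgt
      have := (Real.one_lt_rpow_iff_of_pos h0').2 (Or.inl ⟨hgt, hr⟩)
      linarith
    exact Real.rpow_le_rpow_of_exponent_ge h0' h1 hrp

/-- Key estimate: if `(x_k)` is weakly `p'`-summable with `p'` conjugate to `p`, then
finite sums `∑ c_k x_k` are controlled by the `ℓ^p` norm of the coefficients. -/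
lemma aux_partial_bound {X : Type*} [NormedAddCommGroup X] [NormedSpace ℂ X]
    (p : ℝ) (p' : ℝ≥0∞) (hp1 : 1 ≤ p)
    (hp' : 1 / ENNReal.ofReal p + 1 / p' = 1)
    (x : ℕ → X) (hx : WeaklyQSummable p' x) :
    ∃ K, 0 ≤ K ∧ ∀ (c : ℕ → ℂ) (F : Finset ℕ),
      ‖∑ k ∈ F, c k • x k‖ ≤ K * (∑ k ∈ F, ‖c k‖ ^ p) ^ (1 / p) := by
  by_cases htop : p' = ⊤
  · -- then `p = 1`
    have hp'' : 1 / ENNReal.ofReal p = 1 := by simpa [htop] using hp'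
    have hpe1 : ENNReal.ofReal p = 1 := by rwa [one_div, ENNReal.inv_eq_one] at hp''
    have hpeq : p = 1 := ENNReal.ofReal_eq_one.mp hpe1
    obtain ⟨M, hM⟩ := hx.1 htop
    refine ⟨max M 0, le_max_right _ _, fun c F => ?_⟩
    subst hpeq
    calc ‖∑ k ∈ F, c k • x k‖ ≤ ∑ k ∈ F, ‖c k • x k‖ := norm_sum_le _ _
      _ ≤ ∑ k ∈ F, ‖c k‖ * max M 0 := by
          refine Finset.sum_le_sum fun k _ => ?_
          rw [norm_smul]
          exact mul_le_mul_of_nonneg_left ((hM k).trans (le_max_left _ _)) (norm_nonneg _)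
      _ = max M 0 * ∑ k ∈ F, ‖c k‖ := by rw [← Finset.sum_mul, mul_comm]
      _ = max M 0 * (∑ k ∈ F, ‖c k‖ ^ (1:ℝ)) ^ (1/(1:ℝ)) := by simp [Real.rpow_one]
  · -- the conjugate exponent is finite
    obtain ⟨C, hC⟩ := hx.2 htop
    have hC0 : 0 ≤ C := by simpa using hC 0 (by simp) ∅
    set q := p'.toReal with hq
    have hp'0 : p' ≠ 0 := by
      intro h0
      rw [h0] at hp'
      simp at hp'
    have hp_gt1 : 1 < p := by
      rcases lt_or_eq_of_le hp1 with h | h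
      · exact h
      · exfalso
        rw [← h, ENNReal.ofReal_one] at hp'
        have h1 : (1:ℝ≥0∞) + 1/p' = 1 + 0 := by simpa using hp'
        have h0 : 1/p' = 0 := (ENNReal.add_right_inj (by norm_num)).mp h1
        rw [one_div, ENNReal.inv_eq_zero] at h0
        exact htop h0
    have hp0 : 0 < p := lt_trans one_pos hp_gt1
    have hfin1 : 1 / ENNReal.ofReal p ≠ ⊤ := by
      rw [one_div, ENNReal.inv_ne_top]
      simp [ENNReal.ofReal_eq_zero]
      linarith
    have hfin2 : 1 / p' ≠ ⊤ := by rw [one_div, ENNReal.inv_ne_top]; exact hp'0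
    have hreal : 1 / p + 1 / q = 1 := by
      have h2 := congrArg ENNReal.toReal hp'
      rw [ENNReal.toReal_add hfin1 hfin2, one_div, one_div, ENNReal.toReal_inv,
        ENNReal.toReal_inv, ENNReal.toReal_ofReal hp0.le, ENNReal.toReal_one] at h2
      simpa [one_div, hq] using h2
    have hpq : p.HolderConjugate q := Real.holderConjugate_iff.mpr ⟨hp_gt1, by simpa [one_div] using hreal⟩
    have hq0 : 0 ≤ 1 / q := by
      rw [hq]
      positivity
    refine ⟨C ^ (1/q), Real.rpow_nonneg hC0 _, fun c F => ?_⟩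
    obtain ⟨g, hg1, hgx⟩ := exists_dual_vector'' ℂ (∑ k ∈ F, c k • x k)
    have h1 : ‖∑ k ∈ F, c k • x k‖ = ‖g (∑ k ∈ F, c k • x k)‖ := by
      rw [hgx]; simp
    rw [h1, map_sum]
    calc ‖∑ k ∈ F, g (c k • x k)‖ ≤ ∑ k ∈ F, ‖c k‖ * ‖g (x k)‖ := by
          refine (norm_sum_le _ _).trans (Finset.sum_le_sum fun k _ => ?_)
          rw [map_smul, smul_eq_mul, norm_mul]
      _ ≤ (∑ k ∈ F, ‖c k‖ ^ p) ^ (1/p) * (∑ k ∈ F, ‖g (x k)‖ ^ q) ^ (1/q) :=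
          Real.inner_le_Lp_mul_Lq_of_nonneg F hpq (fun k _ => norm_nonneg _)
            (fun k _ => norm_nonneg _)
      _ ≤ (∑ k ∈ F, ‖c k‖ ^ p) ^ (1/p) * C ^ (1/q) := by
          refine mul_le_mul_of_nonneg_left
            (Real.rpow_le_rpow (Finset.sum_nonneg fun k _ => Real.rpow_nonneg (norm_nonneg _) _)
              (hC g hg1 F) hq0)
            (Real.rpow_nonneg (Finset.sum_nonneg fun k _ => Real.rpow_nonneg (norm_nonneg _) _) _)
      _ = C ^ (1/q) * (∑ k ∈ F, ‖c k‖ ^ p) ^ (1/p) := mul_comm _ _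

set_option maxHeartbeats 1000000 in
set_option synthInstance.maxHeartbeats 400000 in
/-- for `0 < r ≤ 1`, `1 ≤ p ≤ 2` with `1/r = 1/2 + 1/p` and `p'`
conjugate to `p`, every operator `T ∈ N_{[r,p']}(X)`, i.e.
`T x = ∑ λ_k x'_k(x) x_k` with `∑|λ_k|^r < ∞`, `(x'_k)` bounded and `(x_k)` weakly
`p'`-summable, factors as `T = B ∘ A` with `A : X → l_p` `r`-nuclear and
`B : l_p → X` bounded. -/
theorem factorization_N_r_pdual (r p : ℝ) (p' : ℝ≥0∞)
    (hr0 : 0 < r) (hr1 : r ≤ 1) (hp1 : 1 ≤ p) (hp2 : p ≤ 2)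
    (hrp : 1 / r = 1 / 2 + 1 / p)
    (hp' : 1 / ENNReal.ofReal p + 1 / p' = 1)
    (X : Type*) [NormedAddCommGroup X] [NormedSpace ℂ X] [CompleteSpace X]
    (T : X →L[ℂ] X) (lam : ℕ → ℂ) (x' : ℕ → X →L[ℂ] ℂ) (x : ℕ → X)
    (hlam : Summable (fun k => ‖lam k‖ ^ r))
    (hx' : ∃ M, ∀ k, ‖x' k‖ ≤ M)
    (hx : WeaklyQSummable p' x)
    (hT : ∀ y : X, T y = ∑' k, (lam k * (x' k) y) • x k) :
    haveI : Fact (1 ≤ ENNReal.ofReal p) := ⟨ENNReal.one_le_ofReal.mpr hp1⟩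
    ∃ (A : X →L[ℂ] lp (fun _ : ℕ => ℂ) (ENNReal.ofReal p))
      (B : lp (fun _ : ℕ => ℂ) (ENNReal.ofReal p) →L[ℂ] X),
      IsRNuclear r A ∧ T = B.comp A := by
  classical
  have hp0 : 0 < p := lt_of_lt_of_le one_pos hp1
  haveI : Fact (1 ≤ ENNReal.ofReal p) := ⟨ENNReal.one_le_ofReal.mpr hp1⟩
  set pe := ENNReal.ofReal p with hpe
  have hpet : pe.toReal = p := ENNReal.toReal_ofReal hp0.le
  have hpt : 0 < pe.toReal := by rw [hpet]; exact hp0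
  have hpne : pe ≠ ⊤ := ENNReal.ofReal_ne_top
  obtain ⟨M₀, hM₀⟩ := hx'
  set M := max M₀ 0 with hMdef
  have hM0 : (0:ℝ) ≤ M := le_max_right _ _
  have hM : ∀ k, ‖x' k‖ ≤ M := fun k => (hM₀ k).trans (le_max_left _ _)
  have hlamp : Summable fun k => ‖lam k‖ ^ p := aux_rpow_summable hr0 hp0 (hr1.trans hp1) hlam
  set S := ∑' k, ‖lam k‖ ^ p with hS
  have hS0 : 0 ≤ S := tsum_nonneg fun k => Real.rpow_nonneg (norm_nonneg _) _
  -- pointwise bound for the coefficients of `A`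
  have hbound : ∀ (v : X) (k : ℕ), ‖lam k * x' k v‖ ^ p ≤ ‖lam k‖ ^ p * (M * ‖v‖) ^ p := by
    intro v k
    rw [norm_mul, Real.mul_rpow (norm_nonneg _) (norm_nonneg _)]
    refine mul_le_mul_of_nonneg_left (Real.rpow_le_rpow (norm_nonneg _) ?_ hp0.le)
      (Real.rpow_nonneg (norm_nonneg _) _)
    exact ((x' k).le_opNorm v).trans (mul_le_mul_of_nonneg_right (hM k) (norm_nonneg _))
  have hsummand : ∀ v : X, Summable fun k => ‖lam k * x' k v‖ ^ p := by
    intro v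
    exact Summable.of_nonneg_of_le (fun k => Real.rpow_nonneg (norm_nonneg _) _)
      (fun k => hbound v k) (hlamp.mul_right _)
  have hmem : ∀ v : X, Memℓp (fun k => lam k * x' k v) pe := fun v =>
    memℓp_gen (by rw [hpet]; exact hsummand v)
  let a : X → lp (fun _ : ℕ => ℂ) pe := fun v => ⟨fun k => lam k * x' k v, hmem v⟩
  have ha : ∀ (v : X) (k : ℕ), (a v : ∀ _ : ℕ, ℂ) k = lam k * x' k v := fun v k => rfl
  -- `A` as a linear map
  let A₀ : X →ₗ[ℂ] lp (fun _ : ℕ => ℂ) pe :=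
    { toFun := a
      map_add' := fun u v => by
        refine lp.ext (funext fun k => ?_)
        simp only [a, lp.coeFn_add, Pi.add_apply]
        rw [map_add]
        ring
      map_smul' := fun c v => by
        refine lp.ext (funext fun k => ?_)
        simp only [a, lp.coeFn_smul, Pi.smul_apply, RingHom.id_apply, smul_eq_mul]
        rw [map_smul, smul_eq_mul]
        ring }
  have hAbound : ∀ v : X, ‖A₀ v‖ ≤ S ^ (1/p) * M * ‖v‖ := by
    intro v
    have hcoe : ∀ k, ‖(a v : ∀ _ : ℕ, ℂ) k‖ ^ p = ‖lam k * x' k v‖ ^ p := fun k => rfl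
    have h1 : ∑' k, ‖(a v : ∀ _ : ℕ, ℂ) k‖ ^ p ≤ S * (M * ‖v‖) ^ p := by
      rw [hS, ← tsum_mul_right]
      simp only [hcoe]
      exact Summable.tsum_le_tsum (fun k => hbound v k) (hsummand v) (hlamp.mul_right _)
    have h2 : ((M * ‖v‖ : ℝ) ^ p) ^ (1/p) = M * ‖v‖ := by
      rw [one_div]
      exact Real.rpow_rpow_inv (by positivity) hp0.ne'
    have h3 : ‖A₀ v‖ = (∑' k, ‖(a v : ∀ _ : ℕ, ℂ) k‖ ^ p) ^ (1/p) := by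
      show ‖a v‖ = _
      rw [lp.norm_eq_tsum_rpow hpt, hpet]
    rw [h3]
    calc (∑' k, ‖(a v : ∀ _ : ℕ, ℂ) k‖ ^ p) ^ (1/p)
        ≤ (S * (M * ‖v‖) ^ p) ^ (1/p) :=
          Real.rpow_le_rpow (tsum_nonneg fun k => Real.rpow_nonneg (norm_nonneg _) _) h1
            (by positivity)
      _ = S ^ (1/p) * M * ‖v‖ := by
          rw [Real.mul_rpow hS0 (by positivity), h2, mul_assoc]
  let A : X →L[ℂ] lp (fun _ : ℕ => ℂ) pe := A₀.mkContinuous (S ^ (1/p) * M) hAbound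
  have hA_apply : ∀ v : X, A v = a v := fun v => rfl
  -- `A` is `r`-nuclear
  have hArep : ∀ v : X, A v = ∑' k, (lam k * x' k v) • lp.single pe k (1:ℂ) := by
    intro v
    have hs := lp.hasSum_single hpne (a v)
    calc A v = a v := rfl
      _ = ∑' k, lp.single pe k ((a v : ∀ _ : ℕ, ℂ) k) := hs.tsum_eq.symm
      _ = ∑' k, (lam k * x' k v) • lp.single pe k (1:ℂ) := by
          refine tsum_congr fun k => ?_
          rw [← lp.single_smul, smul_eq_mul, mul_one]
  have hRN : IsRNuclear r A := by
    refine ⟨lam, x', fun k => lp.single pe k (1:ℂ), hlam, ⟨M, hM⟩, ⟨1, fun k => ?_⟩, hArep⟩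
    refine (lp.norm_single (E := fun _ : ℕ => ℂ) (ENNReal.toReal_pos_iff.mp hpt).1 k 1).le.trans ?_
    simp
  -- construction of `B`
  obtain ⟨K, hK0, hKb⟩ := aux_partial_bound p p' hp1 hp' x hx
  have hsum : ∀ c : lp (fun _ : ℕ => ℂ) pe, Summable fun k => (c : ∀ _ : ℕ, ℂ) k • x k := by
    intro c
    have hcp : Summable fun k => ‖(c : ∀ _ : ℕ, ℂ) k‖ ^ p := by
      have h := (lp.memℓp c).summable hpt
      rwa [hpet] at h
    rw [summable_iff_vanishing_norm]
    intro ε hε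
    have hδ : (0:ℝ) < (ε / (K + 1)) ^ p := Real.rpow_pos_of_pos (by positivity) _
    obtain ⟨s, hs⟩ := summable_iff_vanishing_norm.mp hcp ((ε / (K+1)) ^ p) hδ
    refine ⟨s, fun t ht => ?_⟩
    have h2 : ∑ k ∈ t, ‖(c : ∀ _ : ℕ, ℂ) k‖ ^ p < (ε / (K+1)) ^ p := by
      have h := hs t ht
      rwa [Real.norm_of_nonneg
        (Finset.sum_nonneg fun k _ => Real.rpow_nonneg (norm_nonneg _) _)] at h
    calc ‖∑ k ∈ t, (c : ∀ _ : ℕ, ℂ) k • x k‖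
        ≤ K * (∑ k ∈ t, ‖(c : ∀ _ : ℕ, ℂ) k‖ ^ p) ^ (1/p) := hKb _ t
      _ ≤ K * ((ε/(K+1)) ^ p) ^ (1/p) :=
          mul_le_mul_of_nonneg_left
            (Real.rpow_le_rpow
              (Finset.sum_nonneg fun k _ => Real.rpow_nonneg (norm_nonneg _) _) h2.le
              (by positivity)) hK0
      _ = K * (ε/(K+1)) := by rw [one_div, Real.rpow_rpow_inv (by positivity) hp0.ne']
      _ < (K+1) * (ε/(K+1)) := by
          refine mul_lt_mul_of_pos_right (by linarith) (by positivity)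
      _ = ε := mul_div_cancel₀ _ (by positivity)
  let B₀ : lp (fun _ : ℕ => ℂ) pe →ₗ[ℂ] X :=
    { toFun := fun c => ∑' k, (c : ∀ _ : ℕ, ℂ) k • x k
      map_add' := fun c d => by
        simp only [lp.coeFn_add, Pi.add_apply, add_smul]
        exact Summable.tsum_add (hsum c) (hsum d)
      map_smul' := fun z c => by
        simp only [lp.coeFn_smul, Pi.smul_apply, RingHom.id_apply]
        rw [← Summable.tsum_const_smul z (hsum c)]
        exact tsum_congr fun k => smul_assoc z _ _ }
  have hBbound : ∀ c, ‖B₀ c‖ ≤ K * ‖c‖ := by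
    intro c
    have htend : Tendsto (fun F : Finset ℕ => ‖∑ k ∈ F, (c : ∀ _ : ℕ, ℂ) k • x k‖) atTop
        (𝓝 ‖∑' k, (c : ∀ _ : ℕ, ℂ) k • x k‖) :=
      (continuous_norm.tendsto _).comp (hsum c).hasSum
    refine le_of_tendsto htend (Eventually.of_forall fun F => ?_)
    calc ‖∑ k ∈ F, (c : ∀ _ : ℕ, ℂ) k • x k‖
        ≤ K * (∑ k ∈ F, ‖(c : ∀ _ : ℕ, ℂ) k‖ ^ p) ^ (1/p) := hKb _ F
      _ ≤ K * (‖c‖ ^ p) ^ (1/p) := by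
          refine mul_le_mul_of_nonneg_left
            (Real.rpow_le_rpow
              (Finset.sum_nonneg fun k _ => Real.rpow_nonneg (norm_nonneg _) _) ?_
              (by positivity)) hK0
          have h := lp.sum_rpow_le_norm_rpow hpt c F
          rwa [hpet] at h
      _ = K * ‖c‖ := by
          rw [one_div, Real.rpow_rpow_inv (norm_nonneg _) hp0.ne']
  let B : lp (fun _ : ℕ => ℂ) pe →L[ℂ] X := B₀.mkContinuous K hBbound
  refine ⟨A, B, hRN, ?_⟩
  ext v
  show T v = B (A v)
  have hBA : B (A v) = ∑' k, (lam k * x' k v) • x k := rfl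
  rw [hBA, hT v]
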